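/- Let F be a field, f(t) = t^n + c_{n-1}t^{n-1} + ... + c_0, and let C be the Frobenius companion matrix of f. Let d_1,...,d_n ∈ F with d_n = -c_{n-1} - d_1 - ... - d_{n-1}, define b_k = -∑_{i=k-1}^n c_i h_{i-k+1}(d_1,...,d_k) (with c_n = 1), and let A be the matrix with diagonal (d_1,...,d_n), subdiagonal 1's, last column (b_1,...,b_{n-1},d_n), zeros elsewhere. Let T be the upper triangular n×n matrix with entries T_{ij} = h_{j-i}(d_1,...,d_i) for i ≤ j and 0 otherwise. Then AT = TC. -/
import Mathlib


/-- `hfun d r k` is the complete homogeneous symmetric polynomial of degree `r`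
in the first `k` values `d 0, …, d (k-1)`. -/
def hfun {F : Type*} [CommRing F] (d : ℕ → F) : ℕ → ℕ → F
  | 0, _ => 1
  | _ + 1, 0 => 0
  | r + 1, k + 1 => hfun d (r + 1) k + d k * hfun d r (k + 1)
  termination_by r k => (r, k)

/-- The matrix with diagonal `d 0, …, d (n-1)`, subdiagonal entries `1`,
last column entries `b` above the diagonal, and zeros elsewhere. -/
def matA {F : Type*} [Field F] (n : ℕ) (d : ℕ → F) (b : Fin (n - 1) → F) :
    Matrix (Fin n) (Fin n) F :=
  Matrix.of fun i j =>
    if i = j then d i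
    else if (i : ℕ) = (j : ℕ) + 1 then 1
    else if (j : ℕ) = n - 1 then (if h : (i : ℕ) < n - 1 then b ⟨i, h⟩ else 0)
    else 0

/-- The Frobenius companion matrix of `t^n + c_{n-1} t^{n-1} + ⋯ + c_0`:
subdiagonal entries `1`, last column `(-c_0, …, -c_{n-1})`, zeros elsewhere. -/
def compMat {F : Type*} [Field F] (n : ℕ) (c : ℕ → F) :
    Matrix (Fin n) (Fin n) F :=
  Matrix.of fun i j =>
    if (i : ℕ) = (j : ℕ) + 1 then 1
    else if (j : ℕ) = n - 1 then -c i
    else 0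

/-- The upper triangular matrix `T` with `T i j = h_{j-i}(d_1, …, d_{i+1})`
for `i ≤ j` (zero-indexed) and `0` otherwise. -/
def matT {F : Type*} [Field F] (n : ℕ) (d : ℕ → F) :
    Matrix (Fin n) (Fin n) F :=
  Matrix.of fun i j =>
    if (i : ℕ) ≤ (j : ℕ) then hfun d ((j : ℕ) - (i : ℕ)) ((i : ℕ) + 1) else 0

section Aux
variable {F : Type*} [CommRing F] (d : ℕ → F)

lemma hfun_zero (k : ℕ) : hfun d 0 k = 1 := by rw [hfun]
lemma hfun_succ_zero (r : ℕ) : hfun d (r+1) 0 = 0 := by rw [hfun]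
lemma hfun_succ (r k : ℕ) : hfun d (r+1) (k+1) = hfun d (r+1) k + d k * hfun d r (k+1) := by
  rw [hfun]
lemma hfun_one (k : ℕ) : hfun d 1 k = ∑ i ∈ Finset.range k, d i := by
  induction k with
  | zero => simp [hfun_succ_zero]
  | succ k ih => rw [hfun_succ, hfun_zero, Finset.sum_range_succ, ih]; ring

lemma ite_ite_zero (p q : Prop) [Decidable p] [Decidable q] (x : F) (h : ¬ (p ∧ q)) :
    (if p then (if q then x else 0) else 0) = 0 := by
  split_ifs with hp hq
  · exact absurd ⟨hp, hq⟩ h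
  · rfl
  · rfl

lemma sum_ite_le (n i : ℕ) (hn : 1 ≤ n) (f : ℕ → F) :
    ∑ k ∈ Finset.range n, (if i ≤ k then f k else 0) = ∑ k ∈ Finset.Icc i (n-1), f k := by
  have hsub : Finset.Icc i (n-1) ⊆ Finset.range n := by
    intro x hx
    simp only [Finset.mem_Icc, Finset.mem_range] at *
    omega
  calc ∑ k ∈ Finset.range n, (if i ≤ k then f k else 0)
      = ∑ k ∈ Finset.Icc i (n-1), (if i ≤ k then f k else 0) := by
        refine (Finset.sum_subset hsub ?_).symm
        intro x hx hx'
        simp only [Finset.mem_Icc, Finset.mem_range] at hx hx'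
        have : ¬ i ≤ x := by omega
        simp [this]
    _ = ∑ k ∈ Finset.Icc i (n-1), f k := by
        refine Finset.sum_congr rfl ?_
        intro x hx
        simp only [Finset.mem_Icc] at hx
        simp [hx.1]

/-- the recurrence in the form needed -/
lemma hfun_rec (i r : ℕ) :
    d i * hfun d r (i + 1) + (if 1 ≤ i then hfun d (r+1) ((i-1)+1) else 0)
      = hfun d (r+1) (i+1) := by
  by_cases h : 1 ≤ i
  · have e3 : (i-1)+1 = i := by omega
    rw [if_pos h, e3, hfun_succ]; ring
  · have : i = 0 := by omega
    subst this
    rw [if_neg h, hfun_succ, hfun_succ_zero]; ring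
end Aux

lemma keyL {F : Type*} [Field F] (n : ℕ) (hn : 1 ≤ n) (d : ℕ → F) (bf : F)
    (i j : ℕ) (hi : i < n) (hbf0 : ¬ i < n - 1 → bf = 0) :
    ∑ k ∈ Finset.range n,
      (if i = k then d i else if i = k + 1 then 1
        else if k = n - 1 then bf else 0) *
      (if k ≤ j then hfun d (j - k) (k + 1) else 0)
    = d i * (if i ≤ j then hfun d (j - i) (i + 1) else 0)
        + (if 1 ≤ i then (if i - 1 ≤ j then hfun d (j - (i-1)) ((i-1) + 1) else 0) else 0)
        + bf * (if n - 1 ≤ j then hfun d (j - (n-1)) ((n-1) + 1) else 0) := by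
  have hpt : ∀ k ∈ Finset.range n,
      (if i = k then d i else if i = k + 1 then 1
        else if k = n - 1 then bf else 0) *
      (if k ≤ j then hfun d (j - k) (k + 1) else 0)
      = (if k = i then d i * (if i ≤ j then hfun d (j - i) (i + 1) else 0) else 0)
        + (if 1 ≤ i then (if k = i - 1 then (if i - 1 ≤ j then hfun d (j - (i-1)) ((i-1)+1) else 0) else 0) else 0)
        + (if k = n - 1 then bf * (if n - 1 ≤ j then hfun d (j - (n-1)) ((n-1)+1) else 0) else 0) := by
    intro k hk
    simp only [Finset.mem_range] at hk
    by_cases h1 : i = k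
    · subst h1
      rw [if_pos rfl, if_pos rfl, ite_ite_zero _ _ _ (by omega)]
      by_cases h3 : i = n - 1
      · rw [if_pos h3, hbf0 (by omega)]; ring
      · rw [if_neg h3]; ring
    · by_cases h2 : i = k + 1
      · rw [if_neg h1, if_pos h2, if_neg (show ¬ k = i by omega),
          if_pos (show 1 ≤ i by omega), if_pos (show k = i - 1 by omega),
          if_neg (show ¬ k = n - 1 by omega)]
        have hik : i - 1 = k := by omega
        rw [hik]; ring
      · rw [if_neg h1, if_neg h2, if_neg (show ¬ k = i by omega),
          ite_ite_zero _ _ _ (by omega)]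
        by_cases h3 : k = n - 1
        · rw [if_pos h3, if_pos h3, h3]; ring
        · rw [if_neg h3, if_neg h3]; ring
  rw [Finset.sum_congr rfl hpt, Finset.sum_add_distrib, Finset.sum_add_distrib,
    Finset.sum_ite_eq' (Finset.range n) i, Finset.sum_ite_eq' (Finset.range n) (n-1)]
  have hmid : ∑ k ∈ Finset.range n,
      (if 1 ≤ i then (if k = i - 1 then (if i - 1 ≤ j then hfun d (j - (i-1)) ((i-1)+1) else 0) else 0) else 0)
      = (if 1 ≤ i then (if i - 1 ≤ j then hfun d (j - (i-1)) ((i-1)+1) else 0) else 0) := by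
    by_cases h2 : 1 ≤ i
    · simp only [if_pos h2]
      rw [Finset.sum_ite_eq' (Finset.range n) (i-1)]
      rw [if_pos (Finset.mem_range.mpr (by omega))]
    · simp [h2]
  rw [hmid, if_pos (Finset.mem_range.mpr hi), if_pos (Finset.mem_range.mpr (by omega : n - 1 < n))]

lemma key {F : Type*} [Field F] (n : ℕ) (hn : 1 ≤ n)
    (c : ℕ → F) (hc : c n = 1) (d : ℕ → F)
    (hd : d (n - 1) = -c (n - 1) - ∑ i ∈ Finset.range (n - 1), d i)
    (b : Fin (n - 1) → F)
    (hb : ∀ k : Fin (n - 1),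
      b k = -∑ i ∈ Finset.Icc (k : ℕ) n, c i * hfun d (i - (k : ℕ)) ((k : ℕ) + 1))
    (i j : ℕ) (hi : i < n) (hj : j < n) :
    ∑ k ∈ Finset.range n,
      (if i = k then d i else if i = k + 1 then 1
        else if k = n - 1 then (if h : i < n - 1 then b ⟨i, h⟩ else 0) else 0) *
      (if k ≤ j then hfun d (j - k) (k + 1) else 0)
    = ∑ k ∈ Finset.range n,
      (if i ≤ k then hfun d (k - i) (i + 1) else 0) *
      (if k = j + 1 then 1 else if j = n - 1 then -c k else 0) := by
  rw [keyL n hn d _ i j hi (fun h => dif_neg (by omega))]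
  by_cases hjn : j = n - 1
  · -- last column
    subst hjn
    have hC : ∀ k ∈ Finset.range n,
        (if i ≤ k then hfun d (k - i) (i + 1) else 0) *
        (if k = (n - 1) + 1 then 1 else if n - 1 = n - 1 then -c k else 0)
        = (if i ≤ k then hfun d (k - i) (i + 1) * (-c k) else 0) := by
      intro k hk
      simp only [Finset.mem_range] at hk
      rw [if_neg (show ¬ k = (n - 1) + 1 by omega), if_pos rfl, ite_mul, zero_mul]
    rw [Finset.sum_congr rfl hC,
      sum_ite_le n i hn (fun k => hfun d (k - i) (i + 1) * (-c k))]
    rw [if_pos (le_refl (n-1)), Nat.sub_self, hfun_zero, mul_one]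
    by_cases hin : i = n - 1
    · -- bottom-right corner
      rw [dif_neg (by omega),
        if_pos (show i ≤ n - 1 by omega), show n - 1 - i = 0 by omega, hfun_zero, mul_one]
      have hmid : (if 1 ≤ i then (if i - 1 ≤ n - 1 then hfun d (n - 1 - (i-1)) ((i-1)+1) else 0) else 0)
          = ∑ k ∈ Finset.range (n-1), d k := by
        by_cases h : 1 ≤ i
        · rw [if_pos h, if_pos (show i - 1 ≤ n - 1 by omega),
            show n - 1 - (i-1) = 1 by omega, hfun_one, show (i-1)+1 = i by omega, hin]
        · rw [if_neg h, show n - 1 = 0 by omega]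
          simp
      rw [hmid, hin, Finset.Icc_self, Finset.sum_singleton, Nat.sub_self, hfun_zero, one_mul, hd]
      ring
    · -- i < n - 1
      have him : i < n - 1 := by omega
      have hbi := hb ⟨i, him⟩
      rw [dif_pos him, hbi]
      obtain ⟨m, rfl⟩ : ∃ m, n = m + 1 := ⟨n - 1, by omega⟩
      simp only [Nat.add_sub_cancel] at him ⊢
      have hsplit : ∑ k ∈ Finset.Icc i (m+1), c k * hfun d (k - i) (i + 1)
          = (∑ k ∈ Finset.Icc i m, c k * hfun d (k - i) (i + 1))
            + c (m+1) * hfun d (m + 1 - i) (i + 1) := by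
        rw [Finset.sum_Icc_succ_top (by omega)]
      rw [hsplit, hc, one_mul]
      have hcomm : ∑ k ∈ Finset.Icc i m, hfun d (k - i) (i + 1) * (-c k)
          = -∑ k ∈ Finset.Icc i m, c k * hfun d (k - i) (i + 1) := by
        rw [← Finset.sum_neg_distrib]
        exact Finset.sum_congr rfl (fun k _ => by ring)
      rw [hcomm]
      have e2 : (if 1 ≤ i then (if i - 1 ≤ m then hfun d (m - (i-1)) ((i-1)+1) else 0) else 0)
          = (if 1 ≤ i then hfun d (m - i + 1) ((i-1)+1) else 0) := by
        by_cases h : 1 ≤ i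
        · rw [if_pos h, if_pos (show i - 1 ≤ m by omega), if_pos h,
            show m - (i-1) = m - i + 1 by omega]
        · rw [if_neg h, if_neg h]
      rw [if_pos (show i ≤ m by omega), e2]
      have hrec := hfun_rec d i (m - i)
      rw [show m - i + 1 = m + 1 - i by omega] at hrec
      rw [show m - i + 1 = m + 1 - i by omega, ← hrec]
      ring
  · -- ordinary column
    have hjn' : j + 1 < n := by omega
    have hR : ∑ k ∈ Finset.range n,
        (if i ≤ k then hfun d (k - i) (i + 1) else 0) *
        (if k = j + 1 then 1 else if j = n - 1 then -c k else 0)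
        = (if i ≤ j + 1 then hfun d (j + 1 - i) (i + 1) else 0) := by
      have hpt : ∀ k ∈ Finset.range n,
          (if i ≤ k then hfun d (k - i) (i + 1) else 0) *
          (if k = j + 1 then 1 else if j = n - 1 then -c k else 0)
          = (if k = j + 1 then (if i ≤ j + 1 then hfun d (j + 1 - i) (i + 1) else 0) else 0) := by
        intro k hk
        by_cases h : k = j + 1
        · subst h; rw [if_pos rfl, if_pos rfl, mul_one]
        · rw [if_neg h, if_neg h, if_neg hjn, mul_zero]
      rw [Finset.sum_congr rfl hpt, Finset.sum_ite_eq' (Finset.range n) (j+1),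
        if_pos (Finset.mem_range.mpr hjn')]
    rw [hR, if_neg (show ¬ n - 1 ≤ j by omega), mul_zero, add_zero]
    rcases Nat.lt_trichotomy i (j+1) with hij | hij | hij
    · -- i ≤ j
      have hij' : i ≤ j := by omega
      have e2 : (if 1 ≤ i then (if i - 1 ≤ j then hfun d (j - (i-1)) ((i-1)+1) else 0) else 0)
          = (if 1 ≤ i then hfun d (j - i + 1) ((i-1)+1) else 0) := by
        by_cases h : 1 ≤ i
        · rw [if_pos h, if_pos (show i - 1 ≤ j by omega), if_pos h,
            show j - (i-1) = j - i + 1 by omega]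
        · rw [if_neg h, if_neg h]
      rw [if_pos (show i ≤ j + 1 by omega), if_pos hij', e2,
        show j + 1 - i = j - i + 1 by omega, ← hfun_rec d i (j - i)]
    · -- i = j + 1
      rw [if_neg (show ¬ i ≤ j by omega), mul_zero, zero_add,
        if_pos (show 1 ≤ i by omega), if_pos (show i - 1 ≤ j by omega),
        show j - (i-1) = 0 by omega, hfun_zero,
        if_pos (show i ≤ j + 1 by omega), show j + 1 - i = 0 by omega, hfun_zero]
    · -- i > j + 1
      rw [if_neg (show ¬ i ≤ j by omega), mul_zero, zero_add,
        ite_ite_zero _ _ _ (by omega), if_neg (show ¬ i ≤ j + 1 by omega)]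

theorem stmt5 {F : Type*} [Field F] (n : ℕ) (hn : 1 ≤ n)
    (c : ℕ → F) (hc : c n = 1) (d : ℕ → F)
    (hd : d (n - 1) = -c (n - 1) - ∑ i ∈ Finset.range (n - 1), d i)
    (b : Fin (n - 1) → F)
    (hb : ∀ k : Fin (n - 1),
      b k = -∑ i ∈ Finset.Icc (k : ℕ) n, c i * hfun d (i - (k : ℕ)) ((k : ℕ) + 1)) :
    matA n d b * matT n d = matT n d * compMat n c := by
  ext i j
  rw [Matrix.mul_apply, Matrix.mul_apply]
  simp only [matA, matT, compMat, Matrix.of_apply, Fin.ext_iff]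
  have h := key n hn c hc d hd b hb i j i.isLt j.isLt
  rw [← Fin.sum_univ_eq_sum_range, ← Fin.sum_univ_eq_sum_range] at h
  convert h using 2
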